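/- Let f_n be the total number of pairs (φ, ν), where φ is a bracketed implication on n distinct variables and ν : Fin n → Bool is a valuation under which φ evaluates to false (that is, f_n is the number of rows with value 'false' in the truth tables of all bracketed implications on n variables). Then f_0 = 0, f_1 = 1, and for all n ≥ 2, f_n = Σ_{i=1}^{n−1} (2^i C_i − f_i) · f_{n−i}, where C_i = (1/i)·binomial(2i−2, i−1) is the Catalan number counting bracketed implications on i variables. -/

import Mathlib

/-- Bracketed implications: `BImp n` is the type of well-formed bracketings of
`p₁ → p₂ → ⋯ → pₙ`. -/
inductive BImp : ℕ → Type where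
  | leaf : BImp 1
  | node : {i j : ℕ} → BImp i → BImp j → BImp (i + j)

/-- Evaluation of a bracketed implication under a valuation `ν : Fin n → Bool`. -/
def BImp.eval : {n : ℕ} → BImp n → (Fin n → Bool) → Bool
  | _, .leaf, ν => ν 0
  | _, .node ψ χ, ν =>
      !(ψ.eval fun k => ν (Fin.castAdd _ k)) || χ.eval fun k => ν (Fin.natAdd _ k)


theorem BImp.pos {n : ℕ} (φ : BImp n) : 1 ≤ n := by
  induction φ with
  | leaf => exact le_refl 1
  | node ψ χ ih1 ih2 => omega

def castB {m n : ℕ} (h : m = n) (φ : BImp m) : BImp n := h ▸ φ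

theorem castB_heq {m n : ℕ} (h : m = n) (φ : BImp m) : HEq (castB h φ) φ := by
  subst h; rfl

def BImp.toTree : {n : ℕ} → BImp n → Tree Unit
  | _, .leaf => .nil
  | _, .node ψ χ => .node () ψ.toTree χ.toTree

theorem toTree_castB {m n : ℕ} (h : m = n) (φ : BImp m) :
    (castB h φ).toTree = φ.toTree := by subst h; rfl

theorem BImp.toTree_numNodes : ∀ {n : ℕ} (φ : BImp n), φ.toTree.numNodes + 1 = n
  | _, .leaf => rfl
  | _, .node ψ χ => by
      simp only [toTree, Tree.numNodes, BinaryTree.numNodes]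
      have h1 := ψ.toTree_numNodes; have h2 := χ.toTree_numNodes
      simp only [Tree.numNodes] at h1 h2
      omega

theorem BImp.toTree_inj' : ∀ {m n : ℕ} (φ : BImp m) (φ' : BImp n),
    φ.toTree = φ'.toTree → m = n ∧ HEq φ φ'
  | _, _, .leaf, .leaf, _ => ⟨rfl, HEq.rfl⟩
  | _, _, .leaf, .node ψ χ, h => absurd h (by simp [BImp.toTree])
  | _, _, .node ψ χ, .leaf, h => absurd h (by simp [BImp.toTree])
  | _, _, .node ψ χ, .node ψ' χ', h => by
      simp only [BImp.toTree, BinaryTree.node.injEq, true_and] at h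
      obtain ⟨h1, h2⟩ := h
      obtain ⟨e1, q1⟩ := toTree_inj' ψ ψ' h1
      obtain ⟨e2, q2⟩ := toTree_inj' χ χ' h2
      subst e1; subst e2
      exact ⟨rfl, heq_of_eq (by rw [eq_of_heq q1, eq_of_heq q2])⟩

theorem BImp.toTree_injective {n : ℕ} : Function.Injective (BImp.toTree (n := n)) :=
  fun φ φ' h => eq_of_heq (toTree_inj' φ φ' h).2

/-- decode a tree -/
def BImp.ofTree : (t : Tree Unit) → BImp (t.numNodes + 1)
  | .nil => .leaf
  | .node _ l r => castB (by simp [Tree.numNodes, BinaryTree.numNodes]; omega) (BImp.node (ofTree l) (ofTree r))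

theorem BImp.toTree_ofTree : ∀ t : Tree Unit, (BImp.ofTree t).toTree = t
  | .nil => rfl
  | .node _ l r => by
      simp only [ofTree, toTree_castB, toTree, toTree_ofTree l, toTree_ofTree r]

noncomputable def BImp.treeEquiv {n : ℕ} (hn : 1 ≤ n) :
    BImp n ≃ {t : Tree Unit // t.numNodes = n - 1} := by
  apply Equiv.ofBijective (fun φ => ⟨φ.toTree, by have := φ.toTree_numNodes; omega⟩)
  constructor
  · intro φ φ' h
    exact BImp.toTree_injective (congrArg Subtype.val h)
  · rintro ⟨t, ht⟩
    have h : t.numNodes + 1 = n := by omega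
    refine ⟨castB h (BImp.ofTree t), ?_⟩
    simp [toTree_castB, BImp.toTree_ofTree]

instance : ∀ n, Finite (BImp n) := by
  intro n
  match n with
  | 0 =>
      have : IsEmpty (BImp 0) := ⟨fun φ => by have := φ.pos; omega⟩
      infer_instance
  | n + 1 =>
      have e2 : {t : Tree Unit // t.numNodes = n} ≃ {t // t ∈ Tree.treesOfNumNodesEq n} :=
        Equiv.subtypeEquivRight (fun t => by simp [BinaryTree.mem_treesOfNumNodesEq])
      exact Finite.of_equiv _ ((BImp.treeEquiv (n := n + 1) (by omega)).trans e2).symm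

noncomputable instance : ∀ n, Fintype (BImp n) := fun _ => Fintype.ofFinite _

theorem card_bimp {n : ℕ} (hn : 1 ≤ n) : Nat.card (BImp n) = catalan (n - 1) := by
  rw [Nat.card_congr (BImp.treeEquiv hn), Nat.card_congr
    (Equiv.subtypeEquivRight (fun t => by simp [BinaryTree.mem_treesOfNumNodesEq]) :
      {t : Tree Unit // t.numNodes = n - 1} ≃ {t // t ∈ Tree.treesOfNumNodesEq (n - 1)}),
    Nat.card_eq_finsetCard, BinaryTree.treesOfNumNodesEq_card_eq_catalan]

/-- number of valuations making φ false -/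
def fcount : {n : ℕ} → BImp n → ℕ
  | _, .leaf => 1
  | _, @BImp.node i j ψ χ => (2 ^ i - fcount ψ) * fcount χ

theorem fcount_castB {m n : ℕ} (h : m = n) (φ : BImp m) :
    fcount (castB h φ) = fcount φ := by subst h; rfl

theorem fcount_le {n : ℕ} (φ : BImp n) : fcount φ ≤ 2 ^ n := by
  induction φ with
  | leaf => simp [fcount]
  | node ψ χ ih1 ih2 =>
      calc (2 ^ _ - fcount ψ) * fcount χ ≤ 2 ^ _ * 2 ^ _ :=
            Nat.mul_le_mul (Nat.sub_le _ _) ih2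
        _ = 2 ^ (_ + _) := (pow_add 2 _ _).symm

def splitEquiv (i j : ℕ) : (Fin (i + j) → Bool) ≃ (Fin i → Bool) × (Fin j → Bool) :=
  (Equiv.arrowCongr finSumFinEquiv.symm (Equiv.refl Bool)).trans
    (Equiv.sumArrowEquivProdArrow _ _ _)

theorem splitEquiv_fst (i j : ℕ) (ν : Fin (i + j) → Bool) :
    (splitEquiv i j ν).1 = fun k => ν (Fin.castAdd j k) := by
  funext k
  simp [splitEquiv, Equiv.sumArrowEquivProdArrow, Equiv.arrowCongr]

theorem splitEquiv_snd (i j : ℕ) (ν : Fin (i + j) → Bool) :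
    (splitEquiv i j ν).2 = fun k => ν (Fin.natAdd i k) := by
  funext k
  simp [splitEquiv, Equiv.sumArrowEquivProdArrow, Equiv.arrowCongr]

theorem card_valuations (n : ℕ) : Nat.card (Fin n → Bool) = 2 ^ n := by
  simp [Nat.card_eq_fintype_card]

theorem card_false_true {n : ℕ} (φ : BImp n) :
    Nat.card {ν : Fin n → Bool // φ.eval ν = false} = fcount φ ∧
    Nat.card {ν : Fin n → Bool // φ.eval ν = true} = 2 ^ n - fcount φ := by
  induction φ with
  | leaf =>
      constructor
      · rw [Nat.card_eq_fintype_card]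
        rw [show (fcount .leaf) = 1 from rfl]
        rw [Fintype.card_eq_one_iff]
        refine ⟨⟨fun _ => false, rfl⟩, ?_⟩
        rintro ⟨ν, hν⟩
        ext k
        have : k = 0 := Subsingleton.elim _ _
        rw [this]; exact hν
      · rw [Nat.card_eq_fintype_card]
        rw [show (2 ^ 1 - fcount .leaf) = 1 by rfl]
        rw [Fintype.card_eq_one_iff]
        refine ⟨⟨fun _ => true, rfl⟩, ?_⟩
        rintro ⟨ν, hν⟩
        ext k
        have : k = 0 := Subsingleton.elim _ _
        rw [this]; exact hν
  | @node i j ψ χ ih1 ih2 =>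
      have key : ∀ b : Bool,
          Nat.card {ν : Fin (i + j) → Bool // (BImp.node ψ χ).eval ν = b} =
          Nat.card {p : (Fin i → Bool) × (Fin j → Bool) //
            (!(ψ.eval p.1) || χ.eval p.2) = b} := by
        intro b
        apply Nat.card_congr
        apply Equiv.subtypeEquiv (splitEquiv i j)
        intro ν
        rw [show (BImp.node ψ χ).eval ν =
          (!(ψ.eval fun k => ν (Fin.castAdd _ k)) || χ.eval fun k => ν (Fin.natAdd _ k)) from rfl,
          ← splitEquiv_fst i j ν, ← splitEquiv_snd i j ν]
      constructor
      · rw [key false]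
        have e : {p : (Fin i → Bool) × (Fin j → Bool) // (!(ψ.eval p.1) || χ.eval p.2) = false}
            ≃ {ν₁ : Fin i → Bool // ψ.eval ν₁ = true} × {ν₂ : Fin j → Bool // χ.eval ν₂ = false} := by
          refine (Equiv.subtypeEquivRight ?_).trans (Equiv.subtypeProdEquivProd)
          intro p
          cases hψ : ψ.eval p.1 <;> cases hχ : χ.eval p.2 <;> simp
        rw [Nat.card_congr e, Nat.card_prod, ih1.2, ih2.1]
        rfl
      · rw [key true]
        have hc : ∀ p : (Fin i → Bool) × (Fin j → Bool),
            (!(ψ.eval p.1) || χ.eval p.2) = true ↔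
            ¬ ((!(ψ.eval p.1) || χ.eval p.2) = false) := by
          intro p; cases (!(ψ.eval p.1) || χ.eval p.2) <;> simp
        rw [Nat.card_congr (Equiv.subtypeEquivRight hc)]
        classical
        rw [Nat.card_eq_fintype_card, Fintype.card_subtype_compl, ← Nat.card_eq_fintype_card,
          ← Nat.card_eq_fintype_card]
        have e : {p : (Fin i → Bool) × (Fin j → Bool) // (!(ψ.eval p.1) || χ.eval p.2) = false}
            ≃ {ν₁ : Fin i → Bool // ψ.eval ν₁ = true} × {ν₂ : Fin j → Bool // χ.eval ν₂ = false} := by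
          refine (Equiv.subtypeEquivRight ?_).trans (Equiv.subtypeProdEquivProd)
          intro p
          cases hψ : ψ.eval p.1 <;> cases hχ : χ.eval p.2 <;> simp
        rw [Nat.card_congr e, Nat.card_prod (α := {ν₁ : Fin i → Bool // ψ.eval ν₁ = true}),
          ih1.2, ih2.1, Nat.card_prod, card_valuations, card_valuations,
          show fcount (BImp.node ψ χ) = (2 ^ i - fcount ψ) * fcount χ from rfl, ← pow_add]


/-- The Catalan number `C n = (1/n) * binomial (2n-2) (n-1)` (the division is exact;
`C 0 = 0`). -/
def catalanC (n : ℕ) : ℕ := (2 * n - 2).choose (n - 1) / n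

/-- `falseRows n` is the number of pairs `(φ, ν)` of a bracketed implication on `n`
variables and a valuation under which it evaluates to false, i.e. the number of rows
with value "false" in the truth tables of all bracketed implications on `n` variables. -/
noncomputable def falseRows (n : ℕ) : ℕ :=
  Nat.card {p : BImp n × (Fin n → Bool) // p.1.eval p.2 = false}

instance : IsEmpty (BImp 0) := ⟨fun φ => by have := φ.pos; omega⟩

theorem falseRows_eq_sum (n : ℕ) : falseRows n = ∑ φ : BImp n, fcount φ := by
  classical
  have e : {p : BImp n × (Fin n → Bool) // p.1.eval p.2 = false}
      ≃ Σ φ : BImp n, {ν : Fin n → Bool // φ.eval ν = false} :=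
    { toFun := fun x => ⟨x.1.1, x.1.2, x.2⟩
      invFun := fun x => ⟨(x.1, x.2.1), x.2.2⟩
      left_inv := fun x => rfl
      right_inv := fun x => rfl }
  rw [falseRows, Nat.card_congr e, Nat.card_eq_fintype_card, Fintype.card_sigma]
  exact Finset.sum_congr rfl fun φ _ => by
    rw [← Nat.card_eq_fintype_card, (card_false_true φ).1]

def gmap {n : ℕ} (x : Σ i : Fin (n - 1), BImp (i.1 + 1) × BImp (n - 1 - i.1)) : BImp n :=
  castB (by have := x.1.isLt; omega) (BImp.node x.2.1 x.2.2)

theorem castB_node_right {a b d : ℕ} (ψ : BImp a) (χ : BImp b) (h2 : b = d)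
    (h : a + d = a + b) : castB h (BImp.node ψ (castB h2 χ)) = BImp.node ψ χ := by
  subst h2; rfl

theorem gmap_bijective {n : ℕ} (hn : 2 ≤ n) : Function.Bijective (gmap (n := n)) := by
  constructor
  · rintro ⟨⟨i, hi⟩, ψ, χ⟩ ⟨⟨i', hi'⟩, ψ', χ'⟩ h
    have ht : Tree.node () ψ.toTree χ.toTree = Tree.node () ψ'.toTree χ'.toTree := by
      have h2 := congrArg BImp.toTree h
      simpa only [gmap, toTree_castB, BImp.toTree] using h2
    obtain ⟨h1, h2⟩ : ψ.toTree = ψ'.toTree ∧ χ.toTree = χ'.toTree := by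
      simpa using ht
    have hii : i = i' := by
      have e1 : ψ.toTree.numNodes + 1 = i + 1 := ψ.toTree_numNodes
      have e2 : ψ'.toTree.numNodes + 1 = i' + 1 := ψ'.toTree_numNodes
      rw [h1] at e1; omega
    subst hii
    exact Sigma.ext rfl (heq_of_eq
      (Prod.ext (BImp.toTree_injective h1) (BImp.toTree_injective h2)))
  · intro φ
    cases φ with
    | leaf => omega
    | @node i j ψ χ =>
        have hi := ψ.pos; have hj := χ.pos
        obtain ⟨c, rfl⟩ : ∃ c, i = c + 1 := ⟨i - 1, by omega⟩
        refine ⟨⟨⟨c, by omega⟩, ψ, castB (by omega : j = c + 1 + j - 1 - c) χ⟩, ?_⟩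
        exact castB_node_right ψ χ _ _

theorem sum_decomp {n : ℕ} (hn : 2 ≤ n) :
    ∑ φ : BImp n, fcount φ =
    ∑ i : Fin (n - 1),
      (∑ ψ : BImp (i.1 + 1), (2 ^ (i.1 + 1) - fcount ψ)) *
        ∑ χ : BImp (n - 1 - i.1), fcount χ := by
  classical
  rw [← Fintype.sum_bijective gmap (gmap_bijective hn)
    (fun x => fcount (gmap x)) fcount (fun x => rfl)]
  rw [← Finset.univ_sigma_univ, Finset.sum_sigma]
  refine Finset.sum_congr rfl fun i _ => ?_
  rw [Fintype.sum_prod_type, Finset.sum_mul_sum]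
  refine Finset.sum_congr rfl fun ψ _ => Finset.sum_congr rfl fun χ _ => ?_
  show fcount (gmap ⟨i, (ψ, χ)⟩) = (2 ^ (i.1 + 1) - fcount ψ) * fcount χ
  rw [gmap, fcount_castB]
  rfl

theorem catalanC_eq {n : ℕ} (hn : 1 ≤ n) : catalanC n = catalan (n - 1) := by
  rw [catalanC, catalan_eq_centralBinom_div, Nat.centralBinom,
    show 2 * (n - 1) = 2 * n - 2 by omega, show n - 1 + 1 = n by omega]

theorem card_bimp' {n : ℕ} (hn : 1 ≤ n) : Fintype.card (BImp n) = catalanC n := by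
  rw [← Nat.card_eq_fintype_card, card_bimp hn, catalanC_eq hn]

theorem tsum_int {m : ℕ} (hm : 1 ≤ m) :
    ((∑ ψ : BImp m, (2 ^ m - fcount ψ) : ℕ) : ℤ) =
      2 ^ m * catalanC m - falseRows m := by
  rw [Nat.cast_sum]
  rw [Finset.sum_congr rfl (fun ψ _ => Nat.cast_sub (fcount_le ψ))]
  rw [Finset.sum_sub_distrib, Finset.sum_const, Finset.card_univ, card_bimp' hm,
    falseRows_eq_sum, Nat.cast_sum]
  push_cast
  ring


/-- Recurrence for the number `f n` of false rows in the truth tables of all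
bracketed implications on `n` variables:
`f 0 = 0`, `f 1 = 1`, and `f n = ∑_{i=1}^{n-1} (2^i C i - f i) * f (n - i)` for `n ≥ 2`. -/
theorem falseRows_recurrence :
    falseRows 0 = 0 ∧ falseRows 1 = 1 ∧
    ∀ n : ℕ, 2 ≤ n →
      (falseRows n : ℤ) =
        ∑ i ∈ Finset.Icc 1 (n - 1),
          ((2 ^ i * catalanC i : ℤ) - falseRows i) * falseRows (n - i) := by
  refine ⟨?_, ?_, ?_⟩
  · rw [falseRows_eq_sum]; simp
  · rw [falseRows_eq_sum]
    have h1 : ∀ φ : BImp 1, fcount φ = 1 := by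
      intro φ
      have hnn := φ.toTree_numNodes
      have ht : φ.toTree = Tree.nil := by
        cases htt : φ.toTree with
        | nil => rfl
        | node a l r => rw [htt] at hnn; simp [Tree.numNodes, BinaryTree.numNodes] at hnn
      have : φ = BImp.leaf := BImp.toTree_injective (by rw [ht]; rfl)
      rw [this]; rfl
    rw [Finset.sum_congr rfl (fun φ _ => h1 φ), Finset.sum_const, Finset.card_univ,
      card_bimp' le_rfl, smul_eq_mul, mul_one]
    rfl
  · intro n hn
    rw [falseRows_eq_sum, sum_decomp hn, Nat.cast_sum]
    have step : ∀ i : Fin (n - 1),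
        (((∑ ψ : BImp (i.1 + 1), (2 ^ (i.1 + 1) - fcount ψ)) *
            ∑ χ : BImp (n - 1 - i.1), fcount χ : ℕ) : ℤ)
        = ((2 ^ (i.1 + 1) * catalanC (i.1 + 1) : ℤ) - falseRows (i.1 + 1)) *
            falseRows (n - (i.1 + 1)) := by
      intro i
      rw [Nat.cast_mul, tsum_int (by omega),
        show n - 1 - i.1 = n - (i.1 + 1) from by omega]
      rw [← falseRows_eq_sum]
    rw [Finset.sum_congr rfl (fun i _ => step i)]
    rw [Fin.sum_univ_eq_sum_range (fun k =>
      ((2 ^ (k + 1) * catalanC (k + 1) : ℤ) - falseRows (k + 1)) * falseRows (n - (k + 1)))]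
    rw [show Finset.Icc 1 (n - 1) = Finset.Ico 1 n by
        rw [← Finset.Ico_add_one_right_eq_Icc, show n - 1 + 1 = n from by omega],
      Finset.sum_Ico_eq_sum_range, show n - 1 = n - 1 from rfl]
    exact Finset.sum_congr rfl fun i _ => by rw [add_comm 1 i]
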